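/- Fix n ≥ m ≥ 2 and 1 ≤ k < m. The sets T(k,t), for t ranging over m-1 ≤ t ≤ n-1, partition into the two-fold decomposition: for m ≤ t < n, T(k,t) is the disjoint union of T(k-1,t) and the set {τ ∈ T(k,t) : τ_{k-1} ≠ b(k-1,t)}; moreover the latter set is in bijection with T(k, t-1). -/

import Mathlib

open Fin.NatCast

set_option maxHeartbeats 1000000

/-- Changepoint sequences: strictly increasing `τ_0 = 0 < τ_1 < ... < τ_m = n`. -/
def CP (n m : ℕ) : Set (Fin (m + 1) → ℕ) :=
  {τ | StrictMono τ ∧ τ 0 = 0 ∧ τ (Fin.last m) = n}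

/-- `T n m k t`: changepoint sequences with `τ (m-1) = t` whose entries at
indices `k, k+1, ..., m-1` are consecutive. -/
def T (n m k t : ℕ) : Set (Fin (m + 1) → ℕ) :=
  {τ | τ ∈ CP n m ∧ τ ((m - 1 : ℕ) : Fin (m + 1)) = t ∧
    ∀ i : ℕ, k ≤ i → i + 1 < m →
      τ ((i + 1 : ℕ) : Fin (m + 1)) = τ ((i : ℕ) : Fin (m + 1)) + 1}

/-- `b m j t = t - ((m-1) - j)`. -/
def b (m j t : ℕ) : ℕ := t - ((m - 1) - j)

lemma val_cast {m i : ℕ} (h : i ≤ m) : (((i : ℕ) : Fin (m + 1)) : ℕ) = i := by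
  rw [Fin.val_natCast, Nat.mod_eq_of_lt (by omega)]

/-- congruence for natCast indices -/
lemma cc {m i j : ℕ} (h : i = j) : ((i : ℕ) : Fin (m + 1)) = ((j : ℕ) : Fin (m + 1)) := by
  rw [h]

lemma mem_T_iff {n m k t : ℕ} (hm : 1 ≤ m) (τ : Fin (m + 1) → ℕ) :
    τ ∈ T n m k t ↔
      (∀ i, i < m → τ ((i : ℕ) : Fin (m + 1)) < τ ((i + 1 : ℕ) : Fin (m + 1))) ∧
      τ ((0 : ℕ) : Fin (m + 1)) = 0 ∧ τ ((m : ℕ) : Fin (m + 1)) = n ∧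
      τ ((m - 1 : ℕ) : Fin (m + 1)) = t ∧
      (∀ i, k ≤ i → i + 1 < m →
        τ ((i + 1 : ℕ) : Fin (m + 1)) = τ ((i : ℕ) : Fin (m + 1)) + 1) := by
  have e0 : ((0 : ℕ) : Fin (m + 1)) = 0 := by ext; rw [val_cast (by omega)]; rfl
  have em : ((m : ℕ) : Fin (m + 1)) = Fin.last m := by
    ext; rw [val_cast (by omega)]; rfl
  constructor
  · rintro ⟨⟨hmono, h0, hl⟩, ht, hc⟩
    refine ⟨?_, ?_, ?_, ht, hc⟩
    · intro i h
      exact hmono (by rw [Fin.lt_def, val_cast (by omega), val_cast (by omega)]; omega)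
    · rw [e0]; exact h0
    · rw [em]; exact hl
  · rintro ⟨hs, h0, hl, ht, hc⟩
    refine ⟨⟨?_, ?_, ?_⟩, ht, hc⟩
    · rw [Fin.strictMono_iff_lt_succ]
      intro i
      have e1 : i.castSucc = (((i : ℕ) : ℕ) : Fin (m + 1)) := by
        ext; rw [val_cast (by omega)]; simp
      have e2 : i.succ = (((i : ℕ) + 1 : ℕ) : Fin (m + 1)) := by
        ext; rw [val_cast (by omega)]; simp
      rw [e1, e2]
      exact hs i i.isLt
    · rw [← e0]; exact h0
    · rw [← em]; exact hl

/-- values on the tail are determined: `τ k + (m-1-k) = t`. -/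
lemma tail_val {n m k t : ℕ} (hm : 1 ≤ m) (hkm : k < m) {τ : Fin (m + 1) → ℕ}
    (hτ : τ ∈ T n m k t) : τ ((k : ℕ) : Fin (m + 1)) + (m - 1 - k) = t := by
  rw [mem_T_iff hm] at hτ
  obtain ⟨hs, h0, hl, ht, hc⟩ := hτ
  suffices H : ∀ d, d ≤ m - 1 - k → τ ((m - 1 - d : ℕ) : Fin (m + 1)) + d = t by
    have h1 := H (m - 1 - k) le_rfl
    rwa [cc (show m - 1 - (m - 1 - k) = k by omega)] at h1
  intro d
  induction d with
  | zero => intro _; simpa using ht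
  | succ d ih =>
    intro hd
    have hih := ih (by omega)
    have h1 := hc (m - 1 - (d + 1)) (by omega) (by omega)
    rw [cc (show m - 1 - (d + 1) + 1 = m - 1 - d by omega)] at h1
    omega

lemma pos_val {n m k t : ℕ} {τ : Fin (m + 1) → ℕ}
    (hτ : τ ∈ T n m k t) (i : Fin (m + 1)) (hi : 0 < (i : ℕ)) : 1 ≤ τ i := by
  obtain ⟨⟨hmono, h0, hl⟩, -, -⟩ := hτ
  have := hmono (show (0 : Fin (m + 1)) < i by rw [Fin.lt_def]; simpa using hi)
  omega

/-- Two-fold decomposition: for `m ≤ t < n`, the set `T k t` is the disjoint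
union of `T (k-1) t` and `{τ ∈ T k t | τ (k-1) ≠ b (k-1) t}`, and the latter set
is in bijection with `T k (t-1)` (by shifting coordinates `k, ..., m-1` down by one). -/
theorem stmt14 (n m k : ℕ) (hm : 2 ≤ m) (hk : 1 ≤ k) (hkm : k < m) :
    ∀ t : ℕ, m ≤ t → t < n →
      T n m k t =
          T n m (k - 1) t ∪ {τ ∈ T n m k t | τ ((k - 1 : ℕ) : Fin (m + 1)) ≠ b m (k - 1) t} ∧
        Disjoint (T n m (k - 1) t)
          {τ ∈ T n m k t | τ ((k - 1 : ℕ) : Fin (m + 1)) ≠ b m (k - 1) t} ∧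
        Set.BijOn
          (fun (τ : Fin (m + 1) → ℕ) (i : Fin (m + 1)) =>
            if k ≤ (i : ℕ) ∧ (i : ℕ) < m then τ i - 1 else τ i)
          {τ ∈ T n m k t | τ ((k - 1 : ℕ) : Fin (m + 1)) ≠ b m (k - 1) t}
          (T n m k (t - 1)) := by
  intro t htm htn
  have hm1 : 1 ≤ m := by omega
  refine ⟨?_, ?_, ?_, ?_, ?_⟩
  · -- union decomposition
    ext τ
    simp only [Set.mem_union, Set.mem_sep_iff]
    constructor
    · intro hτ
      by_cases hb : τ (((k - 1 : ℕ)) : Fin (m + 1)) = b m (k - 1) t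
      · left
        have hkv := tail_val hm1 hkm hτ
        have hpos : 1 ≤ τ ((k : ℕ) : Fin (m + 1)) :=
          pos_val hτ _ (by rw [val_cast (by omega)]; omega)
        unfold b at hb
        rw [mem_T_iff hm1] at hτ ⊢
        obtain ⟨hs, h0, hl, ht, hc⟩ := hτ
        refine ⟨hs, h0, hl, ht, ?_⟩
        intro i hki hi1
        rcases Nat.lt_or_ge i k with hik | hik
        · rw [cc (show i + 1 = k by omega), cc (show i = k - 1 by omega)]
          omega
        · exact hc i hik hi1
      · exact Or.inr ⟨hτ, hb⟩
    · rintro (hτ | ⟨hτ, -⟩)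
      · rw [mem_T_iff hm1] at hτ ⊢
        obtain ⟨hs, h0, hl, ht, hc⟩ := hτ
        exact ⟨hs, h0, hl, ht, fun i hki h => hc i (by omega) h⟩
      · exact hτ
  · -- disjoint
    rw [Set.disjoint_left]
    rintro τ h1 ⟨h2, hne⟩
    apply hne
    have hkv := tail_val hm1 hkm h2
    rw [mem_T_iff hm1] at h1
    obtain ⟨hs, h0, hl, ht, hc⟩ := h1
    have hcc := hc (k - 1) le_rfl (by omega)
    rw [cc (show k - 1 + 1 = k by omega)] at hcc
    unfold b
    omega
  · -- MapsTo
    rintro τ ⟨hτT, hne⟩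
    have hkv := tail_val hm1 hkm hτT
    have hpos : ∀ i : Fin (m + 1), 0 < (i : ℕ) → 1 ≤ τ i := pos_val hτT
    unfold b at hne
    rw [mem_T_iff hm1] at hτT ⊢
    obtain ⟨hs, h0, hl, ht, hc⟩ := hτT
    refine ⟨?_, ?_, ?_, ?_, ?_⟩
    · intro i hi
      simp only [val_cast (show i ≤ m by omega), val_cast (show i + 1 ≤ m by omega)]
      have hlt := hs i hi
      split_ifs with ha hb hb
      · -- both in region
        have := hpos ((i : ℕ) : Fin (m + 1)) (by rw [val_cast (by omega)]; omega)
        omega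
      · omega
      · -- i out, i+1 in : i+1 = k
        rw [cc (show i + 1 = k by omega)] at hlt ⊢
        rw [cc (show i = k - 1 by omega)] at hlt ⊢
        omega
      · omega
    · simp only [val_cast (show 0 ≤ m by omega)]
      rw [if_neg (by omega)]
      exact h0
    · simp only [val_cast (show m ≤ m by omega)]
      rw [if_neg (by omega)]
      exact hl
    · simp only [val_cast (show m - 1 ≤ m by omega)]
      rw [if_pos (by omega)]
      omega
    · intro i hki h
      simp only [val_cast (show i ≤ m by omega), val_cast (show i + 1 ≤ m by omega)]
      rw [if_pos (by omega), if_pos (by omega)]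
      have := hpos ((i : ℕ) : Fin (m + 1)) (by rw [val_cast (by omega)]; omega)
      have := hc i hki h
      omega
  · -- InjOn
    rintro τ ⟨hτT, -⟩ σ ⟨hσT, -⟩ heq
    funext i
    have h1 := congrFun heq i
    simp only at h1
    split_ifs at h1 with h
    · have hτp := pos_val hτT i (by omega)
      have hσp := pos_val hσT i (by omega)
      omega
    · exact h1
  · -- SurjOn
    rintro σ hσ
    have hkvσ := tail_val hm1 hkm hσ
    rw [mem_T_iff hm1] at hσ
    obtain ⟨hs, h0, hl, ht, hc⟩ := hσ
    refine ⟨fun i => if k ≤ (i : ℕ) ∧ (i : ℕ) < m then σ i + 1 else σ i, ⟨?_, ?_⟩, ?_⟩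
    · -- in T n m k t
      rw [mem_T_iff hm1]
      refine ⟨?_, ?_, ?_, ?_, ?_⟩
      · intro i hi
        simp only [val_cast (show i ≤ m by omega), val_cast (show i + 1 ≤ m by omega)]
        have hlt := hs i hi
        split_ifs with ha hb hb
        · omega
        · -- i in, i+1 out : i+1 = m
          rw [cc (show i + 1 = m by omega)] at hlt ⊢
          rw [cc (show i = m - 1 by omega)] at hlt ⊢
          omega
        · omega
        · omega
      · simp only [val_cast (show 0 ≤ m by omega)]
        rw [if_neg (by omega)]
        exact h0
      · simp only [val_cast (show m ≤ m by omega)]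
        rw [if_neg (by omega)]
        exact hl
      · simp only [val_cast (show m - 1 ≤ m by omega)]
        rw [if_pos (by omega)]
        omega
      · intro i hki h
        simp only [val_cast (show i ≤ m by omega), val_cast (show i + 1 ≤ m by omega)]
        rw [if_pos (by omega), if_pos (by omega)]
        have := hc i hki h
        omega
    · -- τ (k-1) ≠ b
      simp only [val_cast (show k - 1 ≤ m by omega)]
      rw [if_neg (by omega)]
      unfold b
      have hlt := hs (k - 1) (by omega)
      rw [cc (show k - 1 + 1 = k by omega)] at hlt
      omega
    · -- f τ = σ
      funext i
      simp only
      by_cases h : k ≤ (i : ℕ) ∧ (i : ℕ) < m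
      · simp [h]
      · simp [h]
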